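/- In the two-leader French-DeGroot model on a connected undirected weighted graph, the polarization satisfies P ≥ 1/2. -/
import Mathlib


open Matrix

noncomputable section

/-- Moore–Penrose pseudoinverse conditions. -/
def IsMoorePenrose {V : Type*} [Fintype V] [DecidableEq V]
    (L Lp : Matrix V V ℝ) : Prop :=
  L * Lp * L = L ∧ Lp * L * Lp = Lp ∧ (L * Lp)ᵀ = L * Lp ∧ (Lp * L)ᵀ = Lp * L

/-- Laplacian of a weighted graph given by weight function `w`. -/
def lapOf {V : Type*} [Fintype V] [DecidableEq V] (w : V → V → ℝ) : Matrix V V ℝ :=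
  Matrix.of fun i j => if i = j then ∑ k, w i k else - w i j

/-- The vector `e_u - e_v`. -/
def bvec {V : Type*} [DecidableEq V] (u v : V) : V → ℝ :=
  Pi.single u 1 - Pi.single v 1

/-- The all-ones matrix. -/
def onesM (V : Type*) [Fintype V] : Matrix V V ℝ := Matrix.of fun _ _ => 1

lemma lap_mulVec {V : Type*} [Fintype V] [DecidableEq V] (w : V → V → ℝ)
    (hw0 : ∀ i, w i i = 0) (x : V → ℝ) (i : V) :
    (lapOf w *ᵥ x) i = ∑ j, w i j * (x i - x j) := by
  simp only [lapOf, mulVec, dotProduct, of_apply]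
  have : ∀ j, (if i = j then ∑ k, w i k else - w i j) * x j
      = (if i = j then (∑ k, w i k) * x j else 0) - w i j * x j := by
    intro j
    by_cases h : i = j
    · subst h; simp [hw0 i]
    · simp [h]
  rw [Finset.sum_congr rfl fun j _ => this j, Finset.sum_sub_distrib,
    Finset.sum_ite_eq (Finset.univ) i (fun j => (∑ k, w i k) * x j)]
  simp [Finset.sum_mul, Finset.mul_sum, mul_sub, Finset.sum_sub_distrib]

lemma lap_quad {V : Type*} [Fintype V] [DecidableEq V] (w : V → V → ℝ)
    (hw0 : ∀ i, w i i = 0) (hwsymm : ∀ i j, w i j = w j i) (x : V → ℝ) :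
    2 * (x ⬝ᵥ lapOf w *ᵥ x) = ∑ i, ∑ j, w i j * (x i - x j) ^ 2 := by
  have h1 : x ⬝ᵥ lapOf w *ᵥ x = ∑ i, ∑ j, w i j * (x i * (x i - x j)) := by
    simp only [dotProduct, lap_mulVec w hw0, Finset.mul_sum]
    refine Finset.sum_congr rfl fun i _ => Finset.sum_congr rfl fun j _ => by ring
  have h2 : x ⬝ᵥ lapOf w *ᵥ x = ∑ i, ∑ j, w i j * (x j * (x j - x i)) := by
    rw [h1, Finset.sum_comm]
    refine Finset.sum_congr rfl fun i _ => Finset.sum_congr rfl fun j _ => by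
      rw [hwsymm i j]
  calc 2 * (x ⬝ᵥ lapOf w *ᵥ x)
      = (∑ i, ∑ j, w i j * (x i * (x i - x j)))
        + ∑ i, ∑ j, w i j * (x j * (x j - x i)) := by rw [← h1, ← h2]; ring
    _ = ∑ i, ∑ j, w i j * (x i - x j) ^ 2 := by
        rw [← Finset.sum_add_distrib]
        refine Finset.sum_congr rfl fun i _ => ?_
        rw [← Finset.sum_add_distrib]
        refine Finset.sum_congr rfl fun j _ => by ring

lemma lap_quad_nonneg {V : Type*} [Fintype V] [DecidableEq V] (w : V → V → ℝ)
    (hw0 : ∀ i, w i i = 0) (hwsymm : ∀ i j, w i j = w j i) (hwnn : ∀ i j, 0 ≤ w i j)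
    (x : V → ℝ) : 0 ≤ x ⬝ᵥ lapOf w *ᵥ x := by
  have h := lap_quad w hw0 hwsymm x
  have : 0 ≤ ∑ i, ∑ j, w i j * (x i - x j) ^ 2 :=
    Finset.sum_nonneg fun i _ => Finset.sum_nonneg fun j _ =>
      mul_nonneg (hwnn i j) (sq_nonneg _)
  linarith

lemma lap_quad_zero {V : Type*} [Fintype V] [DecidableEq V] (w : V → V → ℝ)
    (hw0 : ∀ i, w i i = 0) (hwsymm : ∀ i j, w i j = w j i) (hwnn : ∀ i j, 0 ≤ w i j)
    (x : V → ℝ) (hx : x ⬝ᵥ lapOf w *ᵥ x = 0) : lapOf w *ᵥ x = 0 := by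
  have h := lap_quad w hw0 hwsymm x
  rw [hx, mul_zero] at h
  have hterm : ∀ i ∈ Finset.univ, ∀ j ∈ Finset.univ, w i j * ((x : V → ℝ) i - x j) ^ 2 = 0 := by
    have houter := (Finset.sum_eq_zero_iff_of_nonneg (fun i _ =>
      Finset.sum_nonneg fun j _ => mul_nonneg (hwnn i j) (sq_nonneg _))).mp h.symm
    intro i hi j hj
    exact (Finset.sum_eq_zero_iff_of_nonneg (fun j _ =>
      mul_nonneg (hwnn i j) (sq_nonneg _))).mp (houter i hi) j hj
  funext i
  rw [lap_mulVec w hw0, Pi.zero_apply]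
  refine Finset.sum_eq_zero fun j _ => ?_
  have := hterm i (Finset.mem_univ i) j (Finset.mem_univ j)
  rcases mul_eq_zero.mp this with h0 | h0
  · rw [h0, zero_mul]
  · rw [pow_eq_zero_iff (by norm_num)] at h0
    rw [h0, mul_zero]

lemma pinv_symm {n : ℕ} (L Lp : Matrix (Fin n) (Fin n) ℝ) (hsym : Lᵀ = L)
    (h1 : L * Lp * L = L) (h2 : Lp * L * Lp = Lp)
    (h3 : (L * Lp)ᵀ = L * Lp) (h4 : (Lp * L)ᵀ = Lp * L) : Lpᵀ = Lp := by
  have fA : L * Lpᵀ * L = L := by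
    have := congrArg Matrix.transpose h1
    simpa [Matrix.transpose_mul, hsym, Matrix.mul_assoc] using this
  have fY : Lpᵀ * L * Lpᵀ = Lpᵀ := by
    have := congrArg Matrix.transpose h2
    simpa [Matrix.transpose_mul, hsym, Matrix.mul_assoc] using this
  have fYA : Lpᵀ * L = L * Lp := by rw [← h3, Matrix.transpose_mul, hsym]
  have fAY : L * Lpᵀ = Lp * L := by rw [← h4, Matrix.transpose_mul, hsym]
  have hstar : Lp = Lp * Lpᵀ * L := by
    calc Lp = Lp * L * Lp := h2.symm
      _ = Lp * (L * Lp) := by rw [Matrix.mul_assoc]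
      _ = Lp * (L * Lp)ᵀ := by rw [h3]
      _ = Lp * (Lpᵀ * Lᵀ) := by rw [Matrix.transpose_mul]
      _ = Lp * Lpᵀ * L := by rw [hsym, Matrix.mul_assoc]
  have e1 : Lp = Lp * L * Lpᵀ := by
    calc Lp = Lp * Lpᵀ * L := hstar
      _ = Lp * Lpᵀ * (L * Lp * L) := by rw [h1]
      _ = (Lp * Lpᵀ * L) * (Lp * L) := by noncomm_ring
      _ = Lp * (Lp * L) := by rw [← hstar]
      _ = Lp * (L * Lpᵀ) := by rw [← fAY]
      _ = Lp * L * Lpᵀ := by rw [Matrix.mul_assoc]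
  have hdia : Lpᵀ = L * Lp * Lpᵀ := by
    calc Lpᵀ = Lpᵀ * L * Lpᵀ := fY.symm
      _ = (L * Lp) * Lpᵀ := by rw [fYA]
  have e2 : Lpᵀ = Lp * L * Lpᵀ := by
    calc Lpᵀ = L * Lp * Lpᵀ := hdia
      _ = (L * Lpᵀ * L) * Lp * Lpᵀ := by rw [fA]
      _ = (L * Lpᵀ) * (L * Lp * Lpᵀ) := by noncomm_ring
      _ = (L * Lpᵀ) * Lpᵀ := by rw [← hdia]
      _ = (Lp * L) * Lpᵀ := by rw [fAY]
  exact e2.trans e1.symm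

theorem polarization_ge_half {n : ℕ} (hn : 2 ≤ n)
    (w : Fin n → Fin n → ℝ) (L Lp : Matrix (Fin n) (Fin n) ℝ)
    (hw0 : ∀ i, w i i = 0) (hwsymm : ∀ i j, w i j = w j i) (hwnn : ∀ i j, 0 ≤ w i j)
    (hL : L = lapOf w)
    (hconn : ∀ x : Fin n → ℝ, L *ᵥ x = 0 → ∃ c : ℝ, x = fun _ => c)
    (hMP : IsMoorePenrose L Lp)
    (s0 s1 : Fin n) (hs : s0 ≠ s1) :
    (1 : ℝ) / 2 ≤
      (bvec s1 s0 ⬝ᵥ (Lp * Lp) *ᵥ bvec s1 s0) /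
        (bvec s1 s0 ⬝ᵥ Lp *ᵥ bvec s1 s0) ^ 2 := by
  obtain ⟨h1, h2, h3, h4⟩ := hMP
  have hsym : Lᵀ = L := by
    subst hL
    ext i j
    by_cases h : i = j
    · subst h; rfl
    · simp [lapOf, h, Ne.symm h, hwsymm i j]
  have hLpsym : Lpᵀ = Lp := pinv_symm L Lp hsym h1 h2 h3 h4
  set b : Fin n → ℝ := bvec s1 s0 with hb
  -- projector fact : (L * Lp) *ᵥ b = b
  have hLLLp : L * (L * Lp) = L := by
    have fA : L * Lpᵀ * L = L := by
      have := congrArg Matrix.transpose h1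
      simpa [Matrix.transpose_mul, hsym, Matrix.mul_assoc] using this
    calc L * (L * Lp) = L * (L * Lp)ᵀ := by rw [h3]
      _ = L * (Lpᵀ * Lᵀ) := by rw [Matrix.transpose_mul]
      _ = L * Lpᵀ * L := by rw [hsym, Matrix.mul_assoc]
      _ = L := fA
  have hones : L *ᵥ (fun _ => (1:ℝ)) = 0 := by
    funext i
    rw [hL, lap_mulVec w hw0]
    simp
  have hz : L *ᵥ (b - (L * Lp) *ᵥ b) = 0 := by
    rw [Matrix.mulVec_sub, Matrix.mulVec_mulVec, hLLLp, sub_self]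
  obtain ⟨c, hc⟩ := hconn _ hz
  have hsumb : ∑ i, b i = 0 := by
    simp [hb, bvec, Finset.sum_sub_distrib]
  have hsumP : ∑ i, ((L * Lp) *ᵥ b) i = 0 := by
    have hv : (fun _ => (1:ℝ)) ᵥ* (L * Lp) = 0 := by
      have h1v : (fun _ => (1:ℝ)) ᵥ* L = 0 := by
        rw [← hsym, Matrix.vecMul_transpose, hones]
      rw [← Matrix.vecMul_vecMul, h1v, Matrix.zero_vecMul]
    have := Matrix.dotProduct_mulVec (fun _ => (1:ℝ)) (L * Lp) b
    rw [hv, zero_dotProduct] at this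
    simpa [dotProduct] using this
  have hc0 : c = 0 := by
    have := congrArg (fun v => ∑ i, v i) hc
    simp only [Pi.sub_apply, Finset.sum_sub_distrib, hsumb, hsumP, sub_zero,
      Finset.sum_const, Finset.card_univ, Fintype.card_fin, nsmul_eq_mul] at this
    have hn' : (0:ℝ) < n := by positivity
    rcases mul_eq_zero.mp this.symm with h | h
    · exact absurd h hn'.ne'
    · exact h
  have hproj : (L * Lp) *ᵥ b = b := by
    have : b - (L * Lp) *ᵥ b = 0 := by rw [hc, hc0]; funext i; rfl
    have := sub_eq_zero.mp this
    exact this.symm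
  set y : Fin n → ℝ := Lp *ᵥ b with hy
  have hvecLp : ∀ z : Fin n → ℝ, b ⬝ᵥ Lp *ᵥ z = y ⬝ᵥ z := by
    intro z
    rw [Matrix.dotProduct_mulVec]
    congr 1
    rw [← hLpsym, Matrix.vecMul_transpose]
  have hNum : b ⬝ᵥ (Lp * Lp) *ᵥ b = y ⬝ᵥ y := by
    rw [← Matrix.mulVec_mulVec, hvecLp]
  have hd_eq : b ⬝ᵥ Lp *ᵥ b = y ⬝ᵥ L *ᵥ y := by
    conv_lhs => rw [← h2]
    rw [← Matrix.mulVec_mulVec, ← Matrix.mulVec_mulVec, hvecLp]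
  have hd_nonneg : 0 ≤ b ⬝ᵥ Lp *ᵥ b := by
    rw [hd_eq, hL]
    exact lap_quad_nonneg w hw0 hwsymm hwnn y
  have hbs1 : b s1 = 1 := by
    simp [hb, bvec, Pi.single_apply, Ne.symm hs]
  have hd_ne : b ⬝ᵥ Lp *ᵥ b ≠ 0 := by
    intro h0
    rw [hd_eq] at h0
    have hLy : L *ᵥ y = 0 := by
      rw [hL] at h0 ⊢
      exact lap_quad_zero w hw0 hwsymm hwnn y h0
    have hb0 : b = 0 := by
      rw [← hproj, ← Matrix.mulVec_mulVec, ← hy, hLy]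
    have := congrFun hb0 s1
    rw [hbs1] at this
    exact one_ne_zero this
  have hd_pos : 0 < b ⬝ᵥ Lp *ᵥ b := lt_of_le_of_ne hd_nonneg (Ne.symm hd_ne)
  have hbb : ∑ i, b i ^ 2 = 2 := by
    have hsq : ∀ i, b i ^ 2 = (if i = s1 then (1:ℝ) else 0) + (if i = s0 then 1 else 0) := by
      intro i
      by_cases e1 : i = s1 <;> by_cases e0 : i = s0
      · exact absurd (e0.symm.trans e1) hs
      all_goals simp [hb, bvec, Pi.single_apply, e1, e0, hs, Ne.symm hs]
    rw [Finset.sum_congr rfl fun i _ => hsq i, Finset.sum_add_distrib]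
    simp
    norm_num
  have hcs : (b ⬝ᵥ Lp *ᵥ b) ^ 2 ≤ 2 * (b ⬝ᵥ (Lp * Lp) *ᵥ b) := by
    have h := Finset.sum_mul_sq_le_sq_mul_sq Finset.univ b y
    have e1 : b ⬝ᵥ Lp *ᵥ b = ∑ i, b i * y i := rfl
    have e2 : b ⬝ᵥ (Lp * Lp) *ᵥ b = ∑ i, y i ^ 2 := by
      rw [hNum]
      simp [dotProduct, sq]
    rw [e1, e2]
    rw [hbb] at h
    linarith
  rw [le_div_iff₀ (pow_pos hd_pos 2)]
  linarith
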